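/- The function g ↦ ∏_{i=1}^n sech(λ_i(g))^{(2n+1)/2}, where λ_1(g),...,λ_n(g) are the Cartan KAK coordinates of g ∈ Sp(n,ℝ), is square-integrable on Sp(n,ℝ) with respect to Haar measure; equivalently, ∫_{λ ∈ ℝ^n, λ_1 ≥ ... ≥ λ_n ≥ 0} ∏_{i>j} sinh(λ_i−λ_j) sinh(λ_i+λ_j) · ∏_i sinh(2λ_i) · ∏_i sech(λ_i)^{2n+1} dλ < ∞. -/

import Mathlib

open MeasureTheory Finset Real

private lemma abs_sinh_le_cosh (x : ℝ) : |Real.sinh x| ≤ Real.cosh x := by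
  rw [Real.abs_sinh, ← Real.cosh_abs]
  have h := Real.cosh_sub_sinh |x|
  have := Real.exp_pos (-|x|)
  linarith

private lemma sinh_mul_sinh_le (x y : ℝ) :
    Real.sinh x * Real.sinh y ≤ Real.cosh x * Real.cosh y := by
  calc Real.sinh x * Real.sinh y ≤ |Real.sinh x * Real.sinh y| := le_abs_self _
    _ = |Real.sinh x| * |Real.sinh y| := abs_mul _ _
    _ ≤ Real.cosh x * Real.cosh y :=
        mul_le_mul (abs_sinh_le_cosh x) (abs_sinh_le_cosh y) (abs_nonneg _)
          (Real.cosh_pos x).le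

private lemma neg_sinh_mul_sinh_le (x y : ℝ) :
    -(Real.sinh x * Real.sinh y) ≤ Real.cosh x * Real.cosh y := by
  calc -(Real.sinh x * Real.sinh y) ≤ |Real.sinh x * Real.sinh y| := neg_le_abs _
    _ = |Real.sinh x| * |Real.sinh y| := abs_mul _ _
    _ ≤ Real.cosh x * Real.cosh y :=
        mul_le_mul (abs_sinh_le_cosh x) (abs_sinh_le_cosh y) (abs_nonneg _)
          (Real.cosh_pos x).le

private lemma cosh_add_le (x y : ℝ) :
    Real.cosh (x + y) ≤ 2 * (Real.cosh x * Real.cosh y) := by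
  rw [Real.cosh_add]
  have := sinh_mul_sinh_le x y
  linarith

private lemma cosh_sub_le (x y : ℝ) :
    Real.cosh (x - y) ≤ 2 * (Real.cosh x * Real.cosh y) := by
  rw [Real.cosh_sub]
  have := neg_sinh_mul_sinh_le x y
  linarith

private lemma abs_sinh_two_mul_le (x : ℝ) : |Real.sinh (2 * x)| ≤ 2 * Real.cosh x ^ 2 := by
  refine (abs_sinh_le_cosh _).trans ?_
  rw [Real.cosh_two_mul]
  nlinarith [abs_sinh_le_cosh x, abs_nonneg (Real.sinh x), sq_abs (Real.sinh x),
    (Real.cosh_pos x).le]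

private lemma pair_bound (x y : ℝ) :
    |Real.sinh (x - y) * Real.sinh (x + y)| ≤ (2 * Real.cosh x ^ 2) * (2 * Real.cosh y ^ 2) := by
  rw [abs_mul]
  calc |Real.sinh (x - y)| * |Real.sinh (x + y)|
      ≤ Real.cosh (x - y) * Real.cosh (x + y) :=
        mul_le_mul (abs_sinh_le_cosh _) (abs_sinh_le_cosh _) (abs_nonneg _)
          (Real.cosh_pos _).le
    _ ≤ (2 * (Real.cosh x * Real.cosh y)) * (2 * (Real.cosh x * Real.cosh y)) :=
        mul_le_mul (cosh_sub_le x y) (cosh_add_le x y) (Real.cosh_pos _).le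
          (by positivity)
    _ = (2 * Real.cosh x ^ 2) * (2 * Real.cosh y ^ 2) := by ring

private lemma prod_pairs {n : ℕ} (b : Fin n → ℝ) :
    (∏ i : Fin n, ∏ j ∈ Finset.univ.filter (fun j => j < i), b i * b j)
      = ∏ i : Fin n, b i ^ (n - 1) := by
  have hfilt : ∀ i : Fin n, Finset.univ.filter (fun j => j < i) = Finset.Iio i := by
    intro i; ext j; simp
  have h1 : (∏ i : Fin n, ∏ j ∈ Finset.Iio i, b i) = ∏ i : Fin n, b i ^ (i : ℕ) := by
    refine Finset.prod_congr rfl fun i _ => ?_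
    rw [Finset.prod_const, Fin.card_Iio]
  have h2 : (∏ i : Fin n, ∏ j ∈ Finset.Iio i, b j) = ∏ j : Fin n, b j ^ (n - 1 - (j : ℕ)) := by
    rw [Finset.prod_comm' (t' := Finset.univ) (s' := fun j => Finset.Ioi j)
      (by intro i j; simp)]
    refine Finset.prod_congr rfl fun j _ => ?_
    rw [Finset.prod_const, Fin.card_Ioi]
  calc (∏ i : Fin n, ∏ j ∈ Finset.univ.filter (fun j => j < i), b i * b j)
      = (∏ i : Fin n, (∏ j ∈ Finset.Iio i, b i) * (∏ j ∈ Finset.Iio i, b j)) := by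
        refine Finset.prod_congr rfl fun i _ => ?_
        rw [hfilt, Finset.prod_mul_distrib]
    _ = (∏ i : Fin n, ∏ j ∈ Finset.Iio i, b i) * (∏ i : Fin n, ∏ j ∈ Finset.Iio i, b j) :=
        Finset.prod_mul_distrib
    _ = ∏ i : Fin n, b i ^ (n - 1) := by
        rw [h1, h2, ← Finset.prod_mul_distrib]
        refine Finset.prod_congr rfl fun i _ => ?_
        rw [← pow_add]
        congr 1
        have := i.isLt
        omega

private lemma integrable_sech : Integrable (fun x : ℝ => 1 / Real.cosh x) := by
  have hb : Integrable (fun x : ℝ => 2 * Real.exp (-|x|)) := by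
    have hIoi : IntegrableOn (fun x : ℝ => Real.exp (-|x|)) (Set.Ioi 0) := by
      refine (exp_neg_integrableOn_Ioi 0 one_pos).congr_fun ?_ measurableSet_Ioi
      intro x hx
      show Real.exp (-1 * x) = Real.exp (-|x|)
      rw [abs_of_pos hx]; ring_nf
    have hIic : IntegrableOn (fun x : ℝ => Real.exp (-|x|)) (Set.Iic 0) := by
      rw [← Measure.map_neg_eq_self (volume : Measure ℝ)]
      have m : MeasurableEmbedding fun x : ℝ => -x :=
        (Homeomorph.neg ℝ).measurableEmbedding
      rw [m.integrableOn_map_iff]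
      simp_rw [Function.comp_def, abs_neg, Set.neg_preimage, Set.neg_Iic, neg_zero]
      exact Iff.mpr integrableOn_Ici_iff_integrableOn_Ioi hIoi
    have := (hIic.union hIoi)
    rw [Set.Iic_union_Ioi] at this
    exact (integrableOn_univ.mp this).const_mul 2
  refine hb.mono' ?_ ?_
  · exact (continuous_const.div Real.continuous_cosh
      (fun x => (Real.cosh_pos x).ne')).aestronglyMeasurable
  · filter_upwards with x
    rw [Real.norm_eq_abs, abs_of_nonneg (by positivity)]
    rw [div_le_iff₀ (Real.cosh_pos x)]
    have : Real.exp |x| ≤ 2 * Real.cosh x := by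
      rw [← Real.cosh_abs, ← Real.cosh_add_sinh |x|]
      have h1 := Real.sinh_nonneg_iff.mpr (abs_nonneg x)
      have h2 := Real.cosh_sub_sinh |x|
      have h3 := (Real.exp_pos (-|x|)).le
      linarith
    calc (1:ℝ) = Real.exp (-|x|) * Real.exp |x| := by
          rw [← Real.exp_add]; simp
      _ ≤ Real.exp (-|x|) * (2 * Real.cosh x) :=
          mul_le_mul_of_nonneg_left this (Real.exp_pos _).le
      _ = 2 * Real.exp (-|x|) * Real.cosh x := by ring

/-- `|Λ|^{2n+1} ∈ L²(Sp(n,ℝ))`: in KAK coordinates the density of Haar measure times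
`∏ᵢ sech(λᵢ)^{2n+1}` is integrable on the dominant cone `λ₁ ≥ … ≥ λₙ ≥ 0`. -/
theorem stmt_17 (n : ℕ) :
    MeasureTheory.IntegrableOn
      (fun lam : Fin n → ℝ =>
        (∏ i : Fin n, ∏ j ∈ Finset.univ.filter (fun j => j < i),
            Real.sinh (lam i - lam j) * Real.sinh (lam i + lam j)) *
          (∏ i : Fin n, Real.sinh (2 * lam i)) *
          (∏ i : Fin n, (1 / Real.cosh (lam i)) ^ (2 * n + 1)))
      {lam : Fin n → ℝ | (∀ i j : Fin n, i ≤ j → lam j ≤ lam i) ∧ ∀ i, 0 ≤ lam i}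
      volume := by
  have hg : Integrable (fun lam : Fin n → ℝ => ∏ i : Fin n,
      (2:ℝ) ^ n * (1 / Real.cosh (lam i))) :=
    Integrable.fintype_prod (f := fun _ : Fin n => fun x : ℝ => (2:ℝ) ^ n * (1 / Real.cosh x))
      (fun _ => integrable_sech.const_mul _)
  refine Integrable.mono' (hg.restrict
    (s := {lam : Fin n → ℝ | (∀ i j : Fin n, i ≤ j → lam j ≤ lam i) ∧ ∀ i, 0 ≤ lam i})) ?_ ?_
  · apply Continuous.aestronglyMeasurable
    apply Continuous.mul
    apply Continuous.mul
    · exact continuous_finset_prod _ fun i _ => continuous_finset_prod _ fun j _ =>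
        ((Real.continuous_sinh.comp ((continuous_apply i).sub (continuous_apply j))).mul
          (Real.continuous_sinh.comp ((continuous_apply i).add (continuous_apply j))))
    · exact continuous_finset_prod _ fun i _ =>
        Real.continuous_sinh.comp (continuous_const.mul (continuous_apply i))
    · exact continuous_finset_prod _ fun i _ =>
        ((continuous_const.div (Real.continuous_cosh.comp (continuous_apply i))
          (fun x => (Real.cosh_pos _).ne')).pow _)
  · filter_upwards with lam
    set c : Fin n → ℝ := fun i => Real.cosh (lam i) with hc
    have hcpos : ∀ i, 0 < c i := fun i => Real.cosh_pos _
    rw [Real.norm_eq_abs, abs_mul, abs_mul]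
    have hA : |∏ i : Fin n, ∏ j ∈ Finset.univ.filter (fun j => j < i),
        Real.sinh (lam i - lam j) * Real.sinh (lam i + lam j)|
        ≤ ∏ i : Fin n, (2 * c i ^ 2) ^ (n - 1) := by
      rw [Finset.abs_prod]
      rw [← prod_pairs (fun i => 2 * c i ^ 2)]
      refine Finset.prod_le_prod (fun i _ => abs_nonneg _) fun i _ => ?_
      rw [Finset.abs_prod]
      exact Finset.prod_le_prod (fun j _ => abs_nonneg _) fun j _ => pair_bound _ _
    have hB : |∏ i : Fin n, Real.sinh (2 * lam i)| ≤ ∏ i : Fin n, 2 * c i ^ 2 := by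
      rw [Finset.abs_prod]
      exact Finset.prod_le_prod (fun i _ => abs_nonneg _) fun i _ => abs_sinh_two_mul_le _
    have hC : |∏ i : Fin n, (1 / Real.cosh (lam i)) ^ (2 * n + 1)|
        = ∏ i : Fin n, (1 / c i) ^ (2 * n + 1) := by
      rw [abs_of_nonneg]
      positivity
    rw [hC]
    calc |∏ i : Fin n, ∏ j ∈ Finset.univ.filter (fun j => j < i),
            Real.sinh (lam i - lam j) * Real.sinh (lam i + lam j)| *
          |∏ i : Fin n, Real.sinh (2 * lam i)| *
          (∏ i : Fin n, (1 / c i) ^ (2 * n + 1))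
        ≤ (∏ i : Fin n, (2 * c i ^ 2) ^ (n - 1)) * (∏ i : Fin n, 2 * c i ^ 2) *
          (∏ i : Fin n, (1 / c i) ^ (2 * n + 1)) := by
          refine mul_le_mul_of_nonneg_right ?_ (by positivity)
          exact mul_le_mul hA hB (abs_nonneg _) (by positivity)
      _ = ∏ i : Fin n, ((2 * c i ^ 2) ^ (n - 1) * (2 * c i ^ 2) * (1 / c i) ^ (2 * n + 1)) := by
          rw [← Finset.prod_mul_distrib, ← Finset.prod_mul_distrib]
      _ = ∏ i : Fin n, (2:ℝ) ^ n * (1 / c i) := by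
          refine Finset.prod_congr rfl fun i _ => ?_
          have hn : n - 1 + 1 = n := Nat.succ_pred_eq_of_pos i.pos
          have hci := (hcpos i).ne'
          rw [← pow_succ, hn]
          rw [mul_pow, ← pow_mul, div_pow, one_pow]
          rw [mul_comm 2 n]
          field_simp
          ring
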